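/- For N ∈ {1, 2, 3}, the subgroup of SL₂(ℤ) generated by the two matrices [[1,1],[0,1]] and [[1,0],[N,1]] is equal to the congruence subgroup Γ₁(N) = {γ ∈ SL₂(ℤ) : γ ≡ [[1,*],[0,1]] mod N}. -/

import Mathlib

open Matrix
open scoped MatrixGroups

def tM (n : ℤ) : SL(2,ℤ) := ⟨!![1, n; 0, 1], by norm_num [Matrix.det_fin_two_of]⟩
def lM (n : ℤ) : SL(2,ℤ) := ⟨!![1, 0; n, 1], by norm_num [Matrix.det_fin_two_of]⟩

lemma SL2_ext (g h : SL(2,ℤ)) (h00 : g.1 0 0 = h.1 0 0) (h01 : g.1 0 1 = h.1 0 1)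
    (h10 : g.1 1 0 = h.1 1 0) (h11 : g.1 1 1 = h.1 1 1) : g = h := by
  ext i j; fin_cases i <;> fin_cases j <;> assumption

lemma mul_apply' (g h : SL(2,ℤ)) (i j : Fin 2) :
    (g * h).1 i j = g.1 i 0 * h.1 0 j + g.1 i 1 * h.1 1 j := by
  show ((g : Matrix (Fin 2) (Fin 2) ℤ) * h) i j = _
  rw [Matrix.mul_apply, Fin.sum_univ_two]

lemma tM_mul (a b : ℤ) : tM a * tM b = tM (a + b) := by
  apply SL2_ext <;> simp only [mul_apply'] <;> simp [tM] <;> ring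

lemma lM_mul (a b : ℤ) : lM a * lM b = lM (a + b) := by
  apply SL2_ext <;> simp only [mul_apply'] <;> simp [lM] <;> ring

lemma tM_zero : tM 0 = 1 := by
  apply SL2_ext <;> simp [tM]

lemma lM_zero : lM 0 = 1 := by
  apply SL2_ext <;> simp [lM]

lemma tM_zpow (n k : ℤ) : (tM n) ^ k = tM (k * n) := by
  induction k using Int.induction_on with
  | zero => simpa using tM_zero.symm
  | succ k ih => rw [_root_.zpow_add_one, ih, tM_mul]; ring_nf
  | pred k ih =>
      rw [_root_.zpow_sub_one, ih]
      rw [eq_comm, eq_mul_inv_iff_mul_eq, tM_mul]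
      ring_nf

lemma lM_zpow (n k : ℤ) : (lM n) ^ k = lM (k * n) := by
  induction k using Int.induction_on with
  | zero => simpa using lM_zero.symm
  | succ k ih => rw [_root_.zpow_add_one, ih, lM_mul]; ring_nf
  | pred k ih =>
      rw [_root_.zpow_sub_one, ih]
      rw [eq_comm, eq_mul_inv_iff_mul_eq, lM_mul]
      ring_nf

-- membership helpers
variable {G : Subgroup SL(2,ℤ)}

lemma tM_mem (hT : tM 1 ∈ G) (k : ℤ) : tM k ∈ G := by
  simpa [tM_zpow] using zpow_mem hT k

lemma lM_mem {N : ℤ} (hL : lM N ∈ G) (k : ℤ) : lM (k * N) ∈ G := by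
  simpa [lM_zpow] using zpow_mem hL k

lemma near (a c : ℤ) (hc : c ≠ 0) : ∃ k : ℤ, 2 * |a + k * c| ≤ |c| := by
  obtain ⟨m, hm⟩ : ∃ m, m = |c| := ⟨_, rfl⟩
  have hm0 : 0 < m := hm ▸ abs_pos.2 hc
  have h0 : 0 ≤ a % m := Int.emod_nonneg a (by omega)
  have h1 : a % m < m := Int.emod_lt_of_pos a hm0
  have hmod : a % m = a - m * (a / m) := Int.emod_def a m
  obtain ⟨j, hj⟩ : ∃ j : ℤ, 2 * |a + j * m| ≤ m := by
    rcases le_or_gt (2 * (a % m)) m with h2 | h2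
    · refine ⟨-(a / m), ?_⟩
      have e : a + -(a / m) * m = a % m := by rw [hmod]; ring
      rw [e, abs_of_nonneg h0]; exact h2
    · refine ⟨-(a / m) - 1, ?_⟩
      have e : a + (-(a / m) - 1) * m = a % m - m := by rw [hmod]; ring
      rw [e, abs_of_nonpos (by omega)]; omega
  rcases abs_choice c with h | h
  · rw [hm.trans h] at hj; rw [h]; exact ⟨j, hj⟩
  · rw [hm.trans h] at hj; rw [h]
    exact ⟨-j, by rw [show a + -j * c = a + j * -c by ring]; exact hj⟩

def negI : SL(2,ℤ) := ⟨!![-1, 0; 0, -1], by norm_num [Matrix.det_fin_two_of]⟩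

lemma neg1 : (lM 1 * tM (-1)) ^ 3 = negI := by
  apply SL2_ext <;>
    simp only [pow_succ, pow_zero, one_mul, mul_apply'] <;> simp [lM, tM, negI]

lemma neg2 : (lM 2 * tM (-1)) ^ 2 = negI := by
  apply SL2_ext <;>
    simp only [pow_succ, pow_zero, one_mul, mul_apply'] <;> simp [lM, tM, negI]

lemma descent (N : ℤ) (hN : N = 1 ∨ N = 2 ∨ N = 3) {G : Subgroup SL(2,ℤ)}
    (hT : tM 1 ∈ G) (hL : lM N ∈ G) :
    ∀ n : ℕ, ∀ γ : SL(2,ℤ), (γ.1 1 0).natAbs = n →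
      N ∣ γ.1 0 0 - 1 → N ∣ γ.1 1 1 - 1 → N ∣ γ.1 1 0 → γ ∈ G := by
  have hN1 : 1 ≤ N := by rcases hN with h|h|h <;> omega
  have hN3 : N ≤ 3 := by rcases hN with h|h|h <;> omega
  intro n
  induction n using Nat.strong_induction_on with
  | _ n ih =>
    intro γ hn ha hd hc
    have hdet : γ.1 0 0 * γ.1 1 1 - γ.1 0 1 * γ.1 1 0 = 1 := by
      have h2 := γ.2; rwa [Matrix.det_fin_two] at h2
    by_cases hc0 : γ.1 1 0 = 0
    · -- bottom-left entry is zero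
      rw [hc0, mul_zero, sub_zero] at hdet
      rcases Int.mul_eq_one_iff_eq_one_or_neg_one.1 hdet with ⟨ha1, hd1⟩ | ⟨ha1, hd1⟩
      · have hγ : γ = tM (γ.1 0 1) := by
          apply SL2_ext <;> simp [tM, ha1, hd1, hc0]
        rw [hγ]; exact tM_mem hT _
      · have hN2 : N = 1 ∨ N = 2 := by
          rw [ha1] at ha
          have h2 : N ∣ 2 := by
            have := dvd_neg.2 ha; norm_num at this; exact this
          have := Int.le_of_dvd (by norm_num) h2
          omega
        have hnegI : negI ∈ G := by
          rcases hN2 with h | h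
          · rw [← neg1]; subst h
            exact pow_mem (mul_mem hL (tM_mem hT _)) 3
          · rw [← neg2]; subst h
            exact pow_mem (mul_mem hL (tM_mem hT _)) 2
        have hγ : γ = negI * tM (-(γ.1 0 1)) := by
          apply SL2_ext <;> simp only [mul_apply'] <;> simp [tM, negI, ha1, hd1, hc0]
        rw [hγ]; exact mul_mem hnegI (tM_mem hT _)
    · -- bottom-left entry nonzero: descent
      obtain ⟨c₀, hc₀⟩ := hc
      -- step 1: choose k
      obtain ⟨k, ha1ne, hbd⟩ : ∃ k : ℤ, (γ.1 0 0 + k * γ.1 1 0 ≠ 0) ∧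
          (2 * |γ.1 0 0 + k * γ.1 1 0| ≤ |γ.1 1 0| ∨
            (γ.1 0 0 + k * γ.1 1 0 = 1 ∧ N = 1 ∧ |γ.1 1 0| = 1)) := by
        by_cases h1 : |γ.1 1 0| = 1
        · refine ⟨γ.1 1 0 * (1 - γ.1 0 0), ?_, ?_⟩
          · have : γ.1 1 0 * γ.1 1 0 = 1 := by
              rcases abs_eq (by norm_num : (0:ℤ) ≤ 1) |>.1 h1 with h | h <;> rw [h] <;> ring
            rw [show γ.1 0 0 + γ.1 1 0 * (1 - γ.1 0 0) * γ.1 1 0 =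
              γ.1 0 0 + (1 - γ.1 0 0) * (γ.1 1 0 * γ.1 1 0) by ring, this]
            norm_num
          · right
            have hsq : γ.1 1 0 * γ.1 1 0 = 1 := by
              rcases abs_eq (by norm_num : (0:ℤ) ≤ 1) |>.1 h1 with h | h <;> rw [h] <;> ring
            refine ⟨by rw [show γ.1 0 0 + γ.1 1 0 * (1 - γ.1 0 0) * γ.1 1 0 =
              γ.1 0 0 + (1 - γ.1 0 0) * (γ.1 1 0 * γ.1 1 0) by ring, hsq]; ring, ?_, h1⟩
            have h2 : N ∣ |γ.1 1 0| := (dvd_abs _ _).2 ⟨c₀, hc₀⟩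
            rw [h1] at h2
            have := Int.le_of_dvd one_pos h2
            omega
        · obtain ⟨k, hk⟩ := near (γ.1 0 0) (γ.1 1 0) hc0
          refine ⟨k, ?_, Or.inl hk⟩
          intro h0
          -- a + k c = 0 → c ∣ a → c ∣ 1
          have hdvd : γ.1 1 0 ∣ γ.1 0 0 := ⟨-k, by linear_combination h0⟩
          have : γ.1 1 0 ∣ 1 := by
            have h2 : γ.1 1 0 ∣ γ.1 0 0 * γ.1 1 1 := hdvd.mul_right _
            have h3 : γ.1 1 0 ∣ γ.1 0 1 * γ.1 1 0 := dvd_mul_left _ _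
            have h4 := dvd_sub h2 h3
            rw [hdet] at h4; exact h4
          rcases Int.isUnit_iff.1 (isUnit_of_dvd_one this) with h | h <;>
            simp [h] at h1
      -- step 2: choose j
      obtain ⟨j, hj⟩ := near c₀ (γ.1 0 0 + k * γ.1 1 0) ha1ne
      have hδdef : ∃ δ : SL(2,ℤ), δ = lM (j * N) * (tM k * γ) := ⟨_, rfl⟩
      obtain ⟨δ, hδ⟩ := hδdef
      have e00 : δ.1 0 0 = γ.1 0 0 + k * γ.1 1 0 := by
        rw [hδ, _root_.mul_apply', _root_.mul_apply', _root_.mul_apply']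
        simp [lM, tM]; try ring
      have e01 : δ.1 0 1 = γ.1 0 1 + k * γ.1 1 1 := by
        rw [hδ, _root_.mul_apply', _root_.mul_apply', _root_.mul_apply']
        simp [lM, tM]; try ring
      have e10 : δ.1 1 0 = j * N * (γ.1 0 0 + k * γ.1 1 0) + γ.1 1 0 := by
        rw [hδ, _root_.mul_apply', _root_.mul_apply', _root_.mul_apply']
        simp [lM, tM]; try ring
      have e11 : δ.1 1 1 = j * N * (γ.1 0 1 + k * γ.1 1 1) + γ.1 1 1 := by
        rw [hδ, _root_.mul_apply', _root_.mul_apply', _root_.mul_apply']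
        simp [lM, tM]; try ring
      obtain ⟨a₀, ha₀⟩ := ha
      obtain ⟨d₀, hd₀⟩ := hd
      have da : N ∣ δ.1 0 0 - 1 :=
        ⟨a₀ + k * c₀, by rw [e00]; linear_combination ha₀ + k * hc₀⟩
      have dd : N ∣ δ.1 1 1 - 1 :=
        ⟨j * (γ.1 0 1 + k * γ.1 1 1) + d₀, by rw [e11]; linear_combination hd₀⟩
      have dc : N ∣ δ.1 1 0 :=
        ⟨j * (γ.1 0 0 + k * γ.1 1 0) + c₀, by rw [e10]; linear_combination hc₀⟩
      have habs : |δ.1 1 0| = N * |c₀ + j * (γ.1 0 0 + k * γ.1 1 0)| := by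
        rw [show δ.1 1 0 = N * (c₀ + j * (γ.1 0 0 + k * γ.1 1 0)) by
          rw [e10]; linear_combination hc₀,
          abs_mul, abs_of_pos (by omega : (0:ℤ) < N)]
      have hlt : (δ.1 1 0).natAbs < n := by
        have hCpos : 0 < |γ.1 1 0| := abs_pos.2 hc0
        have hfin : |δ.1 1 0| < |γ.1 1 0| := by
          rcases hbd with hbd | ⟨h1', hN1', hC1⟩
          · nlinarith [abs_nonneg (c₀ + j * (γ.1 0 0 + k * γ.1 1 0)),
              abs_nonneg (γ.1 0 0 + k * γ.1 1 0),
              mul_le_mul_of_nonneg_left hj (by omega : (0:ℤ) ≤ N),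
              mul_le_mul_of_nonneg_left hbd (by omega : (0:ℤ) ≤ N)]
          · have hone : |γ.1 0 0 + k * γ.1 1 0| = 1 := by rw [h1']; simp
            rw [hone] at hj
            have hx : |c₀ + j * (γ.1 0 0 + k * γ.1 1 0)| = 0 := by
              have := abs_nonneg (c₀ + j * (γ.1 0 0 + k * γ.1 1 0)); omega
            rw [habs, hx, hC1]; simp
        rw [Int.abs_eq_natAbs, Int.abs_eq_natAbs] at hfin
        omega
      have hmem : δ ∈ G := ih _ hlt δ rfl da dd dc
      have hγeq : γ = (tM k)⁻¹ * ((lM (j * N))⁻¹ * δ) := by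
        rw [hδ]; group
      rw [hγeq]
      exact mul_mem (inv_mem (tM_mem hT k)) (mul_mem (inv_mem (lM_mem hL j)) hmem)

theorem closure_eq_Gamma1 (N : ℕ) (hN : N ∈ ({1, 2, 3} : Set ℕ)) :
    Subgroup.closure
        ({⟨!![1, 1; 0, 1], by norm_num [Matrix.det_fin_two_of]⟩,
          ⟨!![1, 0; (N : ℤ), 1], by norm_num [Matrix.det_fin_two_of]⟩} : Set SL(2, ℤ)) =
      CongruenceSubgroup.Gamma1 N := by
  simp only [Set.mem_insert_iff, Set.mem_singleton_iff] at hN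
  have hNZ : (N:ℤ) = 1 ∨ (N:ℤ) = 2 ∨ (N:ℤ) = 3 := by
    rcases hN with rfl | rfl | rfl <;> norm_num
  show Subgroup.closure ({tM 1, lM (N:ℤ)} : Set SL(2,ℤ)) = _
  apply le_antisymm
  · rw [Subgroup.closure_le]
    rintro x (rfl | rfl) <;>
      rw [SetLike.mem_coe, CongruenceSubgroup.Gamma1_mem] <;>
      refine ⟨?_, ?_, ?_⟩ <;> simp [tM, lM]
  · intro γ hγ
    rw [CongruenceSubgroup.Gamma1_mem] at hγ
    obtain ⟨h1, h2, h3⟩ := hγ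
    have d1 : (N:ℤ) ∣ γ.1 0 0 - 1 := by
      have h : ((γ.1 0 0 - 1 : ℤ) : ZMod N) = 0 := by push_cast; rw [h1]; ring
      exact_mod_cast (ZMod.intCast_zmod_eq_zero_iff_dvd _ N).1 h
    have d2 : (N:ℤ) ∣ γ.1 1 1 - 1 := by
      have h : ((γ.1 1 1 - 1 : ℤ) : ZMod N) = 0 := by push_cast; rw [h2]; ring
      exact_mod_cast (ZMod.intCast_zmod_eq_zero_iff_dvd _ N).1 h
    have d3 : (N:ℤ) ∣ γ.1 1 0 := by
      exact_mod_cast (ZMod.intCast_zmod_eq_zero_iff_dvd _ N).1 h3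
    exact descent (N:ℤ) hNZ (Subgroup.subset_closure (Or.inl rfl))
      (Subgroup.subset_closure (Or.inr rfl)) _ γ rfl d1 d2 d3
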